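/- Fix 1 ≤ t ≤ k−1 and s ≥ t−1. The set E_t of (s+1)-tuples (x_0,...,x_s) ∈ (F_{q^m}^n)^{s+1} satisfying x_0 + x_1^{[1]} + ... + x_s^{[s]} = 0 and dim_{F_{q^m}} ⟨x_0,...,x_s⟩ = t has cardinality at most C · q^{(mt+n)(s+1−t) + mn(t−1)}, where C is the constant from the Gaussian binomial bound over F_{q^m}. -/
import Mathlib


open Module Polynomial

def frobV {L : Type*} [Field L] (q s : ℕ) {n : ℕ} (v : Fin n → L) : Fin n → L :=
  fun i => v i ^ q ^ s

/-- The Gabidulin code of dimension `k` with support vector `a`: evaluations of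
`q`-polynomials of `q`-degree `< k`, i.e. the span of the Frobenius powers of `a`. -/
def gab {L : Type*} [Field L] (q k : ℕ) {n : ℕ} (a : Fin n → L) : Submodule L (Fin n → L) :=
  Submodule.span L {v : Fin n → L | ∃ j < k, v = frobV q j a}

/-- Componentwise `q^s`-power Frobenius image of a code. -/
def frobCode {L : Type*} [Field L] (q s : ℕ) {n : ℕ} (C : Submodule L (Fin n → L)) :
    Submodule L (Fin n → L) :=
  Submodule.span L (frobV q s '' (C : Set (Fin n → L)))

/-- Dual code with respect to the standard bilinear form. -/
def dualCode {L : Type*} [Field L] {n : ℕ} (C : Submodule L (Fin n → L)) :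
    Submodule L (Fin n → L) where
  carrier := {x | ∀ c ∈ C, ∑ i, x i * c i = 0}
  add_mem' := by
    intro a b ha hb c hc
    simp only [Set.mem_setOf_eq] at *
    simp [add_mul, Finset.sum_add_distrib, ha c hc, hb c hc]
  zero_mem' := by intro c hc; simp
  smul_mem' := by
    intro r x hx c hc
    simp only [Set.mem_setOf_eq] at *
    simp [smul_eq_mul, mul_assoc, ← Finset.mul_sum, hx c hc]

/-- The Gaussian binomial coefficient `[n choose k]_Q = ∏_{t<k} (Q^n - Q^t)/(Q^k - Q^t)`,
as a real number. -/
noncomputable def gaussBinom (Q n k : ℕ) : ℝ :=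
  ∏ t ∈ Finset.range k, ((Q : ℝ) ^ n - (Q : ℝ) ^ t) / ((Q : ℝ) ^ k - (Q : ℝ) ^ t)


set_option linter.unusedVariables false
set_option linter.unusedSectionVars false

section AuxFrob

variable {K L : Type*} [Field K] [Fintype K] [Field L] [Fintype L] [Algebra K L]

lemma frob_add (a b : L) (j : ℕ) :
    (a + b) ^ (Fintype.card K) ^ j = a ^ (Fintype.card K) ^ j + b ^ (Fintype.card K) ^ j := by
  obtain ⟨p, hchar⟩ := CharP.exists K
  haveI : CharP K p := hchar
  obtain ⟨f, hp, hcard⟩ := FiniteField.card K p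
  haveI : CharP L p := charP_of_injective_algebraMap (algebraMap K L).injective p
  haveI : Fact p.Prime := ⟨hp⟩
  rw [hcard, ← pow_mul]
  exact add_pow_char_pow ..

lemma frob_sub (a b : L) (j : ℕ) :
    (a - b) ^ (Fintype.card K) ^ j = a ^ (Fintype.card K) ^ j - b ^ (Fintype.card K) ^ j := by
  obtain ⟨p, hchar⟩ := CharP.exists K
  haveI : CharP K p := hchar
  obtain ⟨f, hp, hcard⟩ := FiniteField.card K p
  haveI : CharP L p := charP_of_injective_algebraMap (algebraMap K L).injective p
  haveI : Fact p.Prime := ⟨hp⟩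
  rw [hcard, ← pow_mul]
  exact sub_pow_char_pow ..

/-- Root-count bound for a `q`-polynomial with nonzero top coefficient. -/
lemma qpoly_root_bound {N : ℕ} (c : Fin (N + 1) → L) (hc : c (Fin.last N) ≠ 0) :
    Nat.card {x : L | ∑ i : Fin (N + 1), c i * x ^ (Fintype.card K) ^ (i : ℕ) = 0}
      ≤ (Fintype.card K) ^ N := by
  classical
  have hq : 1 < Fintype.card K := Fintype.one_lt_card
  set q := Fintype.card K with hqdef
  set P : L[X] := ∑ i : Fin (N + 1), C (c i) * X ^ (q ^ (i : ℕ)) with hP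
  have hcoeff : P.coeff (q ^ N) = c (Fin.last N) := by
    rw [hP, Polynomial.finset_sum_coeff]
    rw [Finset.sum_eq_single (Fin.last N)]
    · simp
    · intro i _ hi
      rw [Polynomial.coeff_C_mul, Polynomial.coeff_X_pow, if_neg, mul_zero]
      exact fun h => hi (by
        have : (i : ℕ) = N := Nat.pow_right_injective hq h.symm
        exact Fin.ext (by simpa using this))
    · simp
  have hPne : P ≠ 0 := fun h => hc (by rw [← hcoeff, h, Polynomial.coeff_zero])
  have hdeg : P.natDegree ≤ q ^ N := by
    apply Polynomial.natDegree_sum_le_of_forall_le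
    intro i _
    apply le_trans (Polynomial.natDegree_C_mul_le _ _)
    apply le_trans (Polynomial.natDegree_X_pow_le _)
    exact Nat.pow_le_pow_right (by omega) (by omega)
  set S : Set L := {x : L | ∑ i : Fin (N + 1), c i * x ^ q ^ (i : ℕ) = 0} with hS
  have hsub : S.toFinset ⊆ P.roots.toFinset := by
    intro x hx
    simp only [Set.mem_toFinset, hS, Set.mem_setOf_eq] at hx
    simp only [Multiset.mem_toFinset, Polynomial.mem_roots hPne, Polynomial.IsRoot]
    rw [hP]
    simpa [Polynomial.eval_finset_sum] using hx
  calc Nat.card S = S.toFinset.card := by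
        rw [Nat.card_coe_set_eq, Set.ncard_eq_toFinset_card']
    _ ≤ P.roots.toFinset.card := Finset.card_le_card hsub
    _ ≤ Multiset.card P.roots := Multiset.toFinset_card_le _
    _ ≤ q ^ N := le_trans (Polynomial.card_roots' P) hdeg


lemma solcount (m : ℕ) (hm : Fintype.card L = Fintype.card K ^ m) :
    ∀ N t : ℕ, 1 ≤ t → t ≤ N → ∀ φ : Fin N → ((Fin t → L) →ₗ[L] L),
    (∀ y, (∀ i, φ i y = 0) → y = 0) →
    Nat.card {y : Fin t → L | ∑ i : Fin N, (φ i y) ^ (Fintype.card K) ^ (i : ℕ) = 0}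
      ≤ (Fintype.card K) ^ ((t - 1) * m + (N - t)) := by
  classical
  set q := Fintype.card K with hq
  have hq1 : 1 < q := Fintype.one_lt_card
  intro N
  induction N with
  | zero => intro t ht1 ht0 _ _; omega
  | succ N IH =>
    intro t ht1 htN φ hφ
    by_cases hlast : φ (Fin.last N) = 0
    · -- last functional vanishes: drop it
      set φ' : Fin N → ((Fin t → L) →ₗ[L] L) := fun i => φ i.castSucc with hφ'def
      have hφ' : ∀ y, (∀ i, φ' i y = 0) → y = 0 := by
        intro y hy
        refine hφ y fun i => ?_
        refine Fin.lastCases ?_ (fun j => ?_) i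
        · rw [hlast]; rfl
        · exact hy j
      have htN' : t ≤ N := by
        have hinj : Function.Injective (LinearMap.pi φ' : (Fin t → L) →ₗ[L] (Fin N → L)) := by
          rw [← LinearMap.ker_eq_bot, LinearMap.ker_eq_bot']
          intro y hy
          exact hφ' y fun i => congrFun hy i
        have := LinearMap.finrank_le_finrank_of_injective hinj
        rwa [Module.finrank_fin_fun, Module.finrank_fin_fun] at this
      have hsets : {y : Fin t → L | ∑ i : Fin (N+1), (φ i y) ^ q ^ (i : ℕ) = 0}
          = {y : Fin t → L | ∑ i : Fin N, (φ' i y) ^ q ^ (i : ℕ) = 0} := by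
        ext y
        simp only [Set.mem_setOf_eq, Fin.sum_univ_castSucc, hlast, hφ'def, Fin.coe_castSucc]
        rw [LinearMap.zero_apply, zero_pow (by positivity), add_zero]
      rw [hsets]
      refine le_trans (IH t ht1 htN' φ' hφ') ?_
      exact Nat.pow_le_pow_right (by omega) (by omega)
    · by_cases ht : t = 1
      · -- base case t = 1 : polynomial root bound
        subst ht
        set δ : Fin 1 → L := fun _ => 1 with hδ
        set c : Fin (N+1) → L := fun i => (φ i δ) ^ q ^ (i : ℕ) with hc
        have hyδ : ∀ y : Fin 1 → L, y = y 0 • δ := by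
          intro y; funext j
          have : j = 0 := Subsingleton.elim _ _
          simp [this, hδ]
        have hclast : c (Fin.last N) ≠ 0 := by
          apply pow_ne_zero
          intro h0
          apply hlast
          apply LinearMap.ext
          intro y
          rw [hyδ y, map_smul, h0, smul_zero]; rfl
        have hsets : ∀ y : Fin 1 → L,
            (∑ i : Fin (N+1), (φ i y) ^ q ^ (i : ℕ)) = ∑ i : Fin (N+1), c i * (y 0) ^ q ^ (i:ℕ) := by
          intro y
          refine Finset.sum_congr rfl fun i _ => ?_
          conv_lhs => rw [hyδ y, map_smul]
          rw [smul_eq_mul, mul_pow, hc, mul_comm]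
        have hinj : Function.Injective
            (fun y : {y : Fin 1 → L | ∑ i : Fin (N+1), (φ i y) ^ q ^ (i : ℕ) = 0} =>
              (⟨y.1 0, by
                have := y.2
                simp only [Set.mem_setOf_eq] at this ⊢
                rw [hsets y.1] at this
                exact this⟩ :
                {x : L | ∑ i : Fin (N + 1), c i * x ^ q ^ (i : ℕ) = 0})) := by
          rintro ⟨y1, h1⟩ ⟨y2, h2⟩ h
          simp only [Subtype.mk.injEq] at h ⊢
          rw [hyδ y1, hyδ y2, h]
        have := Nat.card_le_card_of_injective _ hinj
        refine le_trans this ?_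
        refine le_trans (qpoly_root_bound c hclast) ?_
        apply le_of_eq
        congr 1
        omega
      · -- inductive case t ≥ 2 : coset decomposition
        have ht2 : 2 ≤ t := by omega
        set f := φ (Fin.last N) with hf
        have hrange : LinearMap.range f = ⊤ := by
          rw [eq_top_iff]
          rintro a -
          have : ∃ y, f y ≠ 0 := by
            by_contra h
            push_neg at h
            exact hlast (LinearMap.ext fun y => h y)
          obtain ⟨y, hy⟩ := this
          exact ⟨(a * (f y)⁻¹) • y, by simp [map_smul, smul_eq_mul, mul_assoc,
            inv_mul_cancel₀ hy]⟩
        have hker : finrank L (LinearMap.ker f) = t - 1 := by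
          have h1 := LinearMap.finrank_range_add_finrank_ker f
          rw [hrange, finrank_top, Module.finrank_fin_fun, Module.finrank_self] at h1
          omega
        set b : Basis (Fin (t-1)) L (LinearMap.ker f) := Module.finBasisOfFinrankEq L _ hker
          with hb
        set e : (Fin (t-1) → L) ≃ₗ[L] (LinearMap.ker f) := b.equivFun.symm with he
        set φ' : Fin N → ((Fin (t-1) → L) →ₗ[L] L) := fun i =>
          (φ i.castSucc).comp (((LinearMap.ker f).subtype).comp e.toLinearMap) with hφ'def
        have hcoe : ∀ z, ((e z : Fin t → L)) ∈ LinearMap.ker f := fun z => (e z).2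
        have hφ' : ∀ z, (∀ i, φ' i z = 0) → z = 0 := by
          intro z hz
          have hw : ((e z : Fin t → L)) = 0 := by
            refine hφ _ fun i => ?_
            refine Fin.lastCases ?_ (fun j => ?_) i
            · exact (LinearMap.mem_ker).mp (hcoe z)
            · exact hz j
          exact e.map_eq_zero_iff.mp (Subtype.ext hw)
        have hIH := IH (t-1) (by omega) (by omega) φ' hφ'
        set S : Set (Fin t → L) := {y | ∑ i : Fin (N+1), (φ i y) ^ q ^ (i : ℕ) = 0} with hS
        set S' : Set (Fin (t-1) → L) := {z | ∑ i : Fin N, (φ' i z) ^ q ^ (i : ℕ) = 0} with hS'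
        have hcards : Nat.card ↑S = S.toFinset.card := by
          rw [Nat.card_coe_set_eq, Set.ncard_eq_toFinset_card']
        have hcards' : S'.toFinset.card = Nat.card ↑S' := by
          rw [Nat.card_coe_set_eq, Set.ncard_eq_toFinset_card']
        have hpartial : ∀ y : Fin t → L, y ∈ S.toFinset →
            ∑ i : Fin N, (φ i.castSucc y) ^ q ^ (i : ℕ) = - (f y) ^ q ^ N := by
          intro y hy
          rw [Set.mem_toFinset, hS, Set.mem_setOf_eq, Fin.sum_univ_castSucc] at hy
          simp only [Fin.coe_castSucc, Fin.val_last, ← hf] at hy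
          exact eq_neg_of_add_eq_zero_left hy
        have hB' : Nat.card ↑S' ≤ q ^ ((t-1-1)*m + (N-(t-1))) := hIH
        rw [hcards]
        have hfiber : ∀ a ∈ S.toFinset.image (fun y => f y),
            (S.toFinset.filter (fun y => f y = a)).card ≤ q ^ ((t-1-1)*m + (N-(t-1))) := by
          intro a _
          rcases (S.toFinset.filter (fun y => f y = a)).eq_empty_or_nonempty with hemp | hne
          · simp [hemp]
          · obtain ⟨y₀, hy₀⟩ := hne
            rw [Finset.mem_filter] at hy₀
            obtain ⟨hy₀S, hy₀a⟩ := hy₀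
            set g : (Fin t → L) → (Fin (t-1) → L) := fun y =>
              if h : f y = a then e.symm ⟨y - y₀, by
                rw [LinearMap.mem_ker, map_sub, h, hy₀a, sub_self]⟩ else 0 with hg
            have hmapsto : ∀ y ∈ S.toFinset.filter (fun y => f y = a), g y ∈ S'.toFinset := by
              intro y hy
              rw [Finset.mem_filter] at hy
              obtain ⟨hyS, hya⟩ := hy
              rw [hg]
              simp only [dif_pos hya]
              rw [Set.mem_toFinset, hS', Set.mem_setOf_eq]
              have hterm : ∀ i : Fin N,
                  φ' i (e.symm ⟨y - y₀, by rw [LinearMap.mem_ker, map_sub, hya, hy₀a, sub_self]⟩)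
                    = φ i.castSucc y - φ i.castSucc y₀ := by
                intro i
                rw [hφ'def]
                simp only [LinearMap.comp_apply, LinearEquiv.coe_coe,
                  LinearEquiv.apply_symm_apply, Submodule.coe_subtype, map_sub]
              rw [Finset.sum_congr rfl fun i _ => by rw [hterm i]]
              have hsplit : ∀ i : Fin N, (φ i.castSucc y - φ i.castSucc y₀) ^ q ^ (i : ℕ)
                  = (φ i.castSucc y) ^ q ^ (i : ℕ) - (φ i.castSucc y₀) ^ q ^ (i : ℕ) := by
                intro i; rw [hq]; exact frob_sub _ _ _
              rw [Finset.sum_congr rfl fun i _ => hsplit i, Finset.sum_sub_distrib,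
                hpartial y hyS, hpartial y₀ hy₀S, hya, hy₀a, sub_self]
            have hinjon : Set.InjOn g (S.toFinset.filter (fun y => f y = a)) := by
              intro y1 h1 y2 h2 hgy
              rw [Finset.coe_filter, Set.mem_setOf_eq] at h1 h2
              rw [hg] at hgy
              simp only [dif_pos h1.2, dif_pos h2.2] at hgy
              have := e.symm.injective hgy
              rw [Subtype.ext_iff] at this
              simpa [sub_left_inj] using this
            exact le_trans (Finset.card_le_card_of_injOn g hmapsto hinjon)
              (le_trans hcards'.le hIH)
        calc S.toFinset.card
            ≤ q ^ ((t-1-1)*m + (N-(t-1))) * (S.toFinset.image (fun y => f y)).card :=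
              Finset.card_le_mul_card_image _ _ hfiber
          _ ≤ q ^ ((t-1-1)*m + (N-(t-1))) * q ^ m := by
              apply Nat.mul_le_mul_left
              rw [← hm]
              exact le_trans (Finset.card_le_univ _) (le_of_eq (Finset.card_univ))
          _ = q ^ ((t-1)*m + (N+1-t)) := by
              rw [← pow_add]
              congr 1
              obtain ⟨a, rfl⟩ : ∃ a, t = a + 2 := ⟨t - 2, by omega⟩
              have h1 : (a + 2 - 1 - 1) = a := by omega
              have h2 : (a + 2 - 1) = a + 1 := by omega
              rw [h1, h2, Nat.succ_mul]
              have h3 : N - (a + 1) = N + 1 - (a + 2) := by omega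
              rw [h3]
              generalize a * m = u
              omega

end AuxFrob

lemma card_subspaces_mul (F V : Type*) [Field F] [Fintype F] [AddCommGroup V] [Module F V]
    [Finite V] (t : ℕ) (ht : t ≤ finrank F V) :
    Nat.card {W : Submodule F V // finrank F W = t} *
      ∏ i : Fin t, (Fintype.card F ^ t - Fintype.card F ^ (i : ℕ))
      = ∏ i : Fin t, (Fintype.card F ^ (finrank F V) - Fintype.card F ^ (i : ℕ)) := by
  classical
  haveI : Finite (Submodule F V) := Finite.of_injective _ SetLike.coe_injective
  haveI : Fintype V := Fintype.ofFinite V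
  haveI : Fintype {W : Submodule F V // finrank F W = t} := Fintype.ofFinite _
  set 𝒲 := {W : Submodule F V // finrank F W = t} with h𝒲
  set A := {s : Fin t → V // LinearIndependent F s} with hA
  haveI : Fintype A := Fintype.ofFinite _
  set G : A → 𝒲 := fun f => ⟨Submodule.span F (Set.range f.1), by
    rw [finrank_span_eq_card f.2, Fintype.card_fin]⟩ with hG
  have hfib : ∀ W : 𝒲, Fintype.card {f : A // G f = W}
      = ∏ i : Fin t, (Fintype.card F ^ t - Fintype.card F ^ (i : ℕ)) := by
    intro W
    have hWrank : finrank F W.1 = t := W.2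
    have hequiv : {f : A // G f = W} ≃ {g : Fin t → W.1 // LinearIndependent F g} := by
      refine ⟨fun f => ⟨fun j => ⟨f.1.1 j, ?_⟩, ?_⟩,
        fun g => ⟨⟨fun j => (g.1 j : V), g.2.map' W.1.subtype (Submodule.ker_subtype _)⟩, ?_⟩,
        fun f => Subtype.ext (Subtype.ext (funext fun j => rfl)),
        fun g => Subtype.ext (funext fun j => Subtype.ext rfl)⟩
      · have hspan : Submodule.span F (Set.range f.1.1) = W.1 := by
          have := f.2
          rw [Subtype.ext_iff] at this
          exact this
        rw [← hspan]
        exact Submodule.subset_span (Set.mem_range_self j)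
      · exact LinearIndependent.of_comp W.1.subtype f.1.2
      · apply Subtype.ext
        show Submodule.span F (Set.range fun j => ((g.1 j : V))) = W.1
        have h1 : Submodule.span F (Set.range g.1) = ⊤ := by
          apply Submodule.eq_top_of_finrank_eq
          rw [finrank_span_eq_card g.2, Fintype.card_fin, hWrank]
        have h2 : (Set.range fun j => ((g.1 j : V))) = W.1.subtype '' (Set.range g.1) := by
          rw [← Set.range_comp]; rfl
        rw [h2, ← Submodule.map_span, h1, Submodule.map_top, Submodule.range_subtype]
    rw [Fintype.card_congr hequiv, ← Nat.card_eq_fintype_card,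
      card_linearIndependent (le_of_eq hWrank.symm), hWrank]
  have hsum : Fintype.card A = Fintype.card 𝒲 *
      ∏ i : Fin t, (Fintype.card F ^ t - Fintype.card F ^ (i : ℕ)) := by
    rw [← Fintype.card_congr (Equiv.sigmaFiberEquiv G), Fintype.card_sigma]
    rw [Finset.sum_congr rfl fun W _ => hfib W, Finset.sum_const, Finset.card_univ,
      smul_eq_mul]
  have hcardA : Fintype.card A = ∏ i : Fin t, (Fintype.card F ^ (finrank F V)
      - Fintype.card F ^ (i : ℕ)) := by
    rw [← Nat.card_eq_fintype_card, card_linearIndependent ht]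
  rw [Nat.card_eq_fintype_card, ← hsum, hcardA]


lemma card_subspaces_real (F V : Type*) [Field F] [Fintype F] [AddCommGroup V] [Module F V]
    [Finite V] (t : ℕ) (ht : t ≤ finrank F V) :
    (Nat.card {W : Submodule F V // finrank F W = t} : ℝ)
      = gaussBinom (Fintype.card F) (finrank F V) t := by
  have hQ : 1 < Fintype.card F := Fintype.one_lt_card
  set Q := Fintype.card F with hQdef
  set d := finrank F V with hd
  have key := card_subspaces_mul F V t ht
  have cast1 : ((∏ i : Fin t, (Q^t - Q^(i:ℕ)) : ℕ) : ℝ)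
      = ∏ i ∈ Finset.range t, ((Q:ℝ)^t - (Q:ℝ)^i) := by
    rw [Nat.cast_prod, Fin.prod_univ_eq_prod_range (fun i => ((Q^t - Q^i : ℕ) : ℝ))]
    refine Finset.prod_congr rfl fun i hi => ?_
    rw [Finset.mem_range] at hi
    rw [Nat.cast_sub (Nat.pow_le_pow_right (by omega) hi.le), Nat.cast_pow, Nat.cast_pow]
  have cast2 : ((∏ i : Fin t, (Q^d - Q^(i:ℕ)) : ℕ) : ℝ)
      = ∏ i ∈ Finset.range t, ((Q:ℝ)^d - (Q:ℝ)^i) := by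
    rw [Nat.cast_prod, Fin.prod_univ_eq_prod_range (fun i => ((Q^d - Q^i : ℕ) : ℝ))]
    refine Finset.prod_congr rfl fun i hi => ?_
    rw [Finset.mem_range] at hi
    rw [Nat.cast_sub (Nat.pow_le_pow_right (by omega) (by omega)), Nat.cast_pow, Nat.cast_pow]
  have hne : ∀ i ∈ Finset.range t, ((Q:ℝ)^t - (Q:ℝ)^i) ≠ 0 := by
    intro i hi
    rw [Finset.mem_range] at hi
    have : (Q:ℝ)^i < (Q:ℝ)^t := by
      apply pow_lt_pow_right₀ (by exact_mod_cast hQ) hi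
    linarith
  have hprodne : (∏ i ∈ Finset.range t, ((Q:ℝ)^t - (Q:ℝ)^i)) ≠ 0 :=
    Finset.prod_ne_zero_iff.mpr hne
  rw [gaussBinom, Finset.prod_div_distrib, eq_div_iff hprodne, ← cast1, ← cast2,
    ← Nat.cast_mul, key]


/-- The set `E_t` of `(s+1)`-tuples `(x_0, …, x_s)` with
`x_0 + x_1^{[1]} + ⋯ + x_s^{[s]} = 0` whose span has dimension `t` has cardinality at most
`C q^{(mt+n)(s+1-t) + mn(t-1)}`, for any constant `C` satisfying the Gaussian binomial
upper bound over `q^m`. -/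
theorem card_Et_bound {K L : Type*} [Field K] [Fintype K] [Field L] [Fintype L]
    [Algebra K L] (m n k s t : ℕ) (hm : Fintype.card L = Fintype.card K ^ m)
    (ht1 : 1 ≤ t) (htk : t + 1 ≤ k) (hts : t ≤ s + 1) (hn : n ≤ m)
    (C : ℝ)
    (hC : ∀ a b : ℕ, b ≤ a →
      gaussBinom (Fintype.card L) a b ≤ C * (Fintype.card L : ℝ) ^ (b * (a - b))) :
    (Set.ncard {x : Fin (s + 1) → Fin n → L |
        ∑ i : Fin (s + 1), frobV (Fintype.card K) i.1 (x i) = 0 ∧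
        Module.finrank L ↥(Submodule.span L (Set.range x)) = t} : ℝ)
      ≤ C * (Fintype.card K : ℝ) ^ ((m * t + n) * (s + 1 - t) + m * n * (t - 1)) := by
  classical
  have hq1 : 1 < Fintype.card K := Fintype.one_lt_card
  set q := Fintype.card K with hq
  set E := {x : Fin (s + 1) → Fin n → L |
      ∑ i : Fin (s + 1), frobV q i.1 (x i) = 0 ∧
      Module.finrank L ↥(Submodule.span L (Set.range x)) = t} with hE
  haveI : Finite (Submodule L (Fin (s+1) → L)) := Finite.of_injective _ SetLike.coe_injective
  set col : (Fin (s+1) → Fin n → L) → (Fin n → (Fin (s+1) → L)) :=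
    fun x => fun j i => x i j with hcol
  set g : (Fin (s+1) → Fin n → L) → Submodule L (Fin (s+1) → L) :=
    fun x => Submodule.span L (Set.range (col x)) with hgdef
  -- row rank equals column rank
  have hrank : ∀ x : Fin (s+1) → Fin n → L,
      finrank L (Submodule.span L (Set.range x)) = finrank L (g x) := by
    intro x
    have h1 := Matrix.rank_eq_finrank_span_row (Matrix.of x)
    have h2 := Matrix.rank_eq_finrank_span_cols (Matrix.of x)
    exact h1.symm.trans h2
  -- bound on the "zero-sum" vectors in a t-dimensional subspace
  have hZ : ∀ W : Submodule L (Fin (s+1) → L), finrank L W = t →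
      Nat.card {w : Fin (s+1) → L | w ∈ W ∧ ∑ i : Fin (s+1), (w i) ^ q ^ (i : ℕ) = 0}
        ≤ q ^ ((t-1)*m + (s+1-t)) := by
    intro W hW
    set b : Basis (Fin t) L W := Module.finBasisOfFinrankEq L _ hW with hb
    set e : (Fin t → L) ≃ₗ[L] W := b.equivFun.symm with he
    set φ : Fin (s+1) → ((Fin t → L) →ₗ[L] L) := fun i =>
      (LinearMap.proj i).comp (W.subtype.comp e.toLinearMap) with hφdef
    have hφval : ∀ i z, φ i z = (e z : Fin (s+1) → L) i := fun i z => rfl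
    have hφ : ∀ z, (∀ i, φ i z = 0) → z = 0 := by
      intro z hz
      have hz0 : ((e z : Fin (s+1) → L)) = 0 := funext fun i => hz i
      exact e.map_eq_zero_iff.mp (Subtype.ext hz0)
    have hEquiv : {w : Fin (s+1) → L | w ∈ W ∧ ∑ i : Fin (s+1), (w i) ^ q ^ (i : ℕ) = 0}
        ≃ {z : Fin t → L | ∑ i : Fin (s+1), (φ i z) ^ q ^ (i : ℕ) = 0} := by
      refine ⟨fun w => ⟨e.symm ⟨w.1, w.2.1⟩, ?_⟩,
        fun z => ⟨(e z.1 : Fin (s+1) → L), ⟨(e z.1).2, ?_⟩⟩, fun w => ?_, fun z => ?_⟩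
      · have hv : ∀ i, φ i (e.symm ⟨w.1, w.2.1⟩) = w.1 i := by
          intro i
          rw [hφval, LinearEquiv.apply_symm_apply]
        simp only [Set.mem_setOf_eq]
        rw [Finset.sum_congr rfl fun i _ => by rw [hv i]]
        exact w.2.2
      · have hz := z.2
        simp only [Set.mem_setOf_eq] at hz ⊢
        exact hz
      · apply Subtype.ext
        show ((e (e.symm ⟨w.1, w.2.1⟩) : Fin (s+1) → L)) = w.1
        rw [LinearEquiv.apply_symm_apply]
      · apply Subtype.ext
        show e.symm (e z.1) = z.1
        exact e.symm_apply_apply z.1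
    rw [Nat.card_congr hEquiv]
    exact solcount m hm (s+1) t ht1 hts φ hφ
  have hconstraint : ∀ x ∈ E, ∀ j : Fin n,
      ∑ i : Fin (s+1), (col x j) i ^ q ^ (i : ℕ) = 0 := by
    intro x hx j
    have h2 := congrFun hx.1 j
    rw [Finset.sum_apply] at h2
    exact h2
  set sE := E.toFinset with hsE
  set BZ := q ^ ((t-1)*m + (s+1-t)) with hBZ
  have hfibercard : ∀ W ∈ sE.image g,
      (sE.filter (fun x => g x = W)).card ≤ BZ ^ n := by
    intro W hWmem
    have hWt : finrank L W = t := by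
      obtain ⟨x, hx, rfl⟩ := Finset.mem_image.mp hWmem
      exact (hrank x).symm.trans ((Set.mem_toFinset.mp hx).2)
    set Z := {w : Fin (s+1) → L | w ∈ W ∧ ∑ i : Fin (s+1), (w i) ^ q ^ (i : ℕ) = 0} with hZdef
    have hzero : (0 : Fin (s+1) → L) ∈ Z := by
      constructor
      · exact W.zero_mem
      · refine Finset.sum_eq_zero fun i _ => ?_
        rw [Pi.zero_apply, zero_pow (by positivity)]
    set F : (Fin (s+1) → Fin n → L) → (Fin n → ↥Z) := fun x j =>
      if h : x ∈ E ∧ g x = W then ⟨col x j, by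
        refine ⟨?_, hconstraint x h.1 j⟩
        rw [← h.2]
        exact Submodule.subset_span (Set.mem_range_self j)⟩
      else ⟨0, hzero⟩ with hF
    have hinj : Set.InjOn F (sE.filter (fun x => g x = W)) := by
      intro x1 h1 x2 h2 hFeq
      rw [Finset.coe_filter, Set.mem_setOf_eq] at h1 h2
      have hx1 : x1 ∈ E ∧ g x1 = W := ⟨Set.mem_toFinset.mp h1.1, h1.2⟩
      have hx2 : x2 ∈ E ∧ g x2 = W := ⟨Set.mem_toFinset.mp h2.1, h2.2⟩
      funext i j
      have hj := congrFun hFeq j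
      rw [hF] at hj
      simp only [dif_pos hx1, dif_pos hx2] at hj
      have := congrArg Subtype.val hj
      exact congrFun this i
    calc (sE.filter (fun x => g x = W)).card
        ≤ (Finset.univ : Finset (Fin n → ↥Z)).card :=
          Finset.card_le_card_of_injOn F (fun x _ => Finset.mem_univ _) hinj
      _ = (Nat.card ↥Z) ^ n := by
          rw [Finset.card_univ, ← Nat.card_eq_fintype_card, Nat.card_fun]
          simp
      _ ≤ BZ ^ n := Nat.pow_le_pow_left (hZ W hWt) n
  have himage : (sE.image g).card
      ≤ Nat.card {W : Submodule L (Fin (s+1) → L) // finrank L W = t} := by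
    haveI : Fintype (Submodule L (Fin (s+1) → L)) := Fintype.ofFinite _
    rw [Nat.card_eq_fintype_card, Fintype.card_subtype]
    apply Finset.card_le_card
    intro W hW
    rw [Finset.mem_filter]
    refine ⟨Finset.mem_univ _, ?_⟩
    obtain ⟨x, hx, rfl⟩ := Finset.mem_image.mp hW
    exact (hrank x).symm.trans ((Set.mem_toFinset.mp hx).2)
  have hmain : sE.card ≤ BZ ^ n * (sE.image g).card :=
    Finset.card_le_mul_card_image sE _ hfibercard
  have hmain2 : sE.card ≤ BZ ^ n * Nat.card {W : Submodule L (Fin (s+1) → L) // finrank L W = t} :=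
    le_trans hmain (Nat.mul_le_mul le_rfl himage)
  have hNcard : Set.ncard E = sE.card := Set.ncard_eq_toFinset_card' E
  rw [hNcard]
  have hWcard : (Nat.card {W : Submodule L (Fin (s+1) → L) // finrank L W = t} : ℝ)
      = gaussBinom (Fintype.card L) (s+1) t := by
    have hfr : finrank L (Fin (s+1) → L) = s + 1 := Module.finrank_fin_fun L
    have h := card_subspaces_real L (Fin (s+1) → L) t (by rw [hfr]; exact hts)
    rwa [hfr] at h
  have hCQ := hC (s+1) t hts
  have hs1t : s + 1 - t = (s+1) - t := rfl
  calc (sE.card : ℝ)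
      ≤ ((BZ ^ n * Nat.card {W : Submodule L (Fin (s+1) → L) // finrank L W = t} : ℕ) : ℝ) := by
        exact_mod_cast hmain2
    _ = ((BZ ^ n : ℕ) : ℝ) * gaussBinom (Fintype.card L) (s+1) t := by
        rw [Nat.cast_mul, hWcard]
    _ ≤ ((BZ ^ n : ℕ) : ℝ) * (C * (Fintype.card L : ℝ) ^ (t * ((s+1) - t))) := by
        apply mul_le_mul_of_nonneg_left hCQ (by positivity)
    _ = C * (((BZ ^ n : ℕ) : ℝ) * (Fintype.card L : ℝ) ^ (t * ((s+1) - t))) := by ring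
    _ = C * (q:ℝ) ^ ((m*t+n)*(s+1-t) + m*n*(t-1)) := by
        congr 1
        have hQq : (Fintype.card L : ℝ) = (q:ℝ)^m := by exact_mod_cast hm
        rw [Nat.cast_pow, hQq, ← pow_mul]
        rw [hBZ, Nat.cast_pow, ← pow_mul, ← pow_add]
        congr 1
        generalize s + 1 - t = u
        generalize t - 1 = v
        ring
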